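/- Let S = S_0 ⇒ S_1 ⇒ … ⇒ S_k = T be a sequence of tandem duplications starting from an exemplar string S. Then for each i, the number of maximal (S, S_i)-stable substrings is at most 2i + 1. The inductive step: one tandem duplication increases the number of maximal stable substrings by at most 2. -/

import Mathlib

open scoped Classical

variable {α : Type*}

/-- A single tandem duplication: `AXB ⇒ AXXB` with `X` nonempty. -/
def TDStep (S T : List α) : Prop :=
  ∃ A X B : List α, X ≠ [] ∧ S = A ++ X ++ B ∧ T = A ++ X ++ X ++ B

/-- `TDk k S T`: `T` is obtained from `S` by exactly `k` tandem duplications. -/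
def TDk : ℕ → List α → List α → Prop
  | 0, S, T => S = T
  | n+1, S, T => ∃ U, TDStep S U ∧ TDk n U T

/-- The tandem duplication distance, `⊤` if `T` is not reachable from `S`. -/
noncomputable def distTD (S T : List α) : ℕ∞ :=
  sInf {n : ℕ∞ | ∃ m : ℕ, n = m ∧ TDk m S T}

/-- The pair `xy` is stable in `T`: every occurrence of `x` in `T` is followed
by `y`, and every occurrence of `y` is preceded by `x`. -/
def StablePair (x y : α) (T : List α) : Prop :=
  (∀ A B : List α, T = A ++ x :: B → ∃ B', B = y :: B') ∧
  (∀ A B : List α, T = A ++ y :: B → ∃ A', A = A' ++ [x])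

/-- The maximal `(S,T)`-stable substrings of `S`, obtained by splitting `S` at
every consecutive pair that is not stable in `T`. -/
noncomputable def blocks (S T : List α) : List (List α) :=
  S.splitBy (fun a b => decide (StablePair a b T))

/-- The number of maximal `(S,T)`-stable substrings of a nonempty `S`: one more
than the number of consecutive pairs of `S` that are not stable in `T`. -/
noncomputable def numStable (S T : List α) : ℕ :=
  (blocks S T).length

namespace Stmt13Aux

/-- count of bad adjacent pairs in the chain `a :: l` -/
def bad (r : α → α → Bool) : α → List α → ℕ
  | _, [] => 0
  | a, b :: l => (if r a b then 0 else 1) + bad r b l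

/-- count of adjacent pairs with first component `u` -/
noncomputable def cf (u : α) : α → List α → ℕ
  | _, [] => 0
  | a, b :: l => (if a = u then 1 else 0) + cf u b l

/-- count of adjacent pairs with second component `v` -/
noncomputable def cs (v : α) : α → List α → ℕ
  | _, [] => 0
  | _, b :: l => (if b = v then 1 else 0) + cs v b l

theorem splitBy_loop_length (r : α → α → Bool) :
    ∀ (l : List α) (a : α) (g : List α) (gs : List (List α)),
      (List.splitBy.loop r l a g gs).length = gs.length + 1 + bad r a l := by
  intro l
  induction l with
  | nil => intro a g gs; simp [List.splitBy.loop, bad]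
  | cons b l ih =>
    intro a g gs
    rw [List.splitBy.loop]
    cases h : r a b <;> simp [ih, bad, h] <;> omega

theorem splitBy_length (r : α → α → Bool) (a : α) (l : List α) :
    (List.splitBy r (a :: l)).length = 1 + bad r a l := by
  rw [List.splitBy, splitBy_loop_length]; simp

theorem bad_eq_zero (r : α → α → Bool) (S : List α)
    (h : ∀ (P Q : List α) (a b : α), S = P ++ a :: b :: Q → r a b = true) :
    ∀ (l : List α) (P : List α) (a : α), S = P ++ a :: l → bad r a l = 0 := by
  intro l
  induction l with
  | nil => intro P a _; simp [bad]
  | cons b l ih =>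
    intro P a hP
    have h1 : r a b = true := h P l a b hP
    have h2 : bad r b l = 0 := ih (P ++ [a]) b (by simpa using hP)
    simp [bad, h1, h2]

theorem bad_le_aux (r r' : α → α → Bool) (u v : α)
    (h : ∀ a b, r a b = true → a ≠ u → b ≠ v → r' a b = true) :
    ∀ (l : List α) (a : α), bad r' a l ≤ bad r a l + cf u a l + cs v a l := by
  intro l
  induction l with
  | nil => intro a; simp [bad, cf, cs]
  | cons b l ih =>
    intro a
    have h1 : (if r' a b then 0 else 1) ≤
        (if r a b then 0 else 1) + (if a = u then 1 else 0) + (if b = v then 1 else 0) := by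
      by_cases hr' : r' a b = true
      · rw [if_pos hr']; exact Nat.zero_le _
      · rw [if_neg hr']
        by_cases hr : r a b = true
        · rw [if_pos hr]
          by_cases hau : a = u
          · rw [if_pos hau]; split <;> omega
          · rw [if_neg hau]
            by_cases hbv : b = v
            · rw [if_pos hbv]
            · exact absurd (h a b hr hau hbv) hr'
        · rw [if_neg hr]; split <;> split <;> omega
    have h2 := ih b
    simp only [bad, cf, cs]
    omega

theorem cf_eq_zero (u : α) : ∀ (l : List α) (a : α), u ∉ a :: l → cf u a l = 0 := by
  intro l
  induction l with
  | nil => intro a _; simp [cf]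
  | cons b l ih =>
    intro a hu
    have h1 : ¬ (a = u) := fun h => hu (by rw [h]; exact List.mem_cons_self)
    have h2 : cf u b l = 0 := ih b (fun hm => hu (List.mem_cons_of_mem _ hm))
    simp [cf, if_neg h1, h2]

theorem cf_le (u : α) : ∀ (l : List α) (a : α), (a :: l).Nodup → cf u a l ≤ 1 := by
  intro l
  induction l with
  | nil => intro a _; simp [cf]
  | cons b l ih =>
    intro a hnd
    by_cases ha : a = u
    · have hu : u ∉ b :: l := by rw [← ha]; exact (List.nodup_cons.mp hnd).1
      simp [cf, if_pos ha, cf_eq_zero u l b hu]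
    · have := ih b (List.nodup_cons.mp hnd).2
      simp only [cf, if_neg ha]
      omega

theorem cs_eq_zero (v : α) : ∀ (l : List α) (a : α), v ∉ l → cs v a l = 0 := by
  intro l
  induction l with
  | nil => intro a _; simp [cs]
  | cons b l ih =>
    intro a hv
    have h1 : ¬ (b = v) := fun h => hv (by rw [h]; exact List.mem_cons_self)
    have h2 : cs v b l = 0 := ih b (fun hm => hv (List.mem_cons_of_mem _ hm))
    simp [cs, if_neg h1, h2]

theorem cs_le (v : α) : ∀ (l : List α) (a : α), l.Nodup → cs v a l ≤ 1 := by
  intro l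
  induction l with
  | nil => intro a _; simp [cs]
  | cons b l ih =>
    intro a hnd
    by_cases hb : b = v
    · have hv : v ∉ l := by rw [← hb]; exact (List.nodup_cons.mp hnd).1
      simp [cs, if_pos hb, cs_eq_zero v l b hv]
    · have := ih b (List.nodup_cons.mp hnd).2
      simp only [cs, if_neg hb]
      omega

/-- A length-2 infix of a concatenation is an infix of a part or spans the boundary. -/
theorem infix_two {a b : α} :
    ∀ {M N : List α}, [a, b] <:+: M ++ N →
      [a, b] <:+: M ∨ [a, b] <:+: N ∨ (M.getLast? = some a ∧ N.head? = some b) := by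
  intro M
  induction M with
  | nil => intro N h; exact Or.inr (Or.inl h)
  | cons m M ih =>
    intro N h
    rcases List.infix_cons_iff.mp h with hp | hi
    · obtain ⟨t, ht⟩ := hp
      have ht' : a :: (b :: t) = m :: (M ++ N) := by simpa using ht
      injection ht' with h1 h2
      subst h1
      cases M with
      | nil =>
        refine Or.inr (Or.inr ⟨rfl, ?_⟩)
        have hN : N = b :: t := by simpa using h2.symm
        rw [hN]; rfl
      | cons m2 M' =>
        have h3 : b :: t = m2 :: (M' ++ N) := by simpa using h2
        injection h3 with h4 _
        subst h4
        exact Or.inl ⟨[], M', by simp⟩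
    · rcases ih hi with h1 | h2 | ⟨h3, h4⟩
      · exact Or.inl (List.infix_cons h1)
      · exact Or.inr (Or.inl h2)
      · refine Or.inr (Or.inr ⟨?_, h4⟩)
        cases M with
        | nil => simp at h3
        | cons m2 M' => rw [List.getLast?_cons_cons]; exact h3

theorem stable_transfer {x y : α} {A X B : List α} (hX : X ≠ [])
    (hx : X.getLast? ≠ some x) (hy : X.head? ≠ some y)
    (h : StablePair x y (A ++ X ++ B)) : StablePair x y (A ++ X ++ X ++ B) := by
  obtain ⟨u, hu⟩ := Option.isSome_iff_exists.mp (List.getLast?_isSome.mpr hX)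
  obtain ⟨v, hv⟩ := Option.isSome_iff_exists.mp (List.isSome_head?.mpr hX)
  have hUT : A ++ X ++ X ++ B = (A ++ X) ++ (X ++ B) := by simp
  have key : ∀ p q : α, [p, q] <:+: A ++ X ++ X ++ B →
      [p, q] <:+: A ++ X ++ B ∨ (p = u ∧ q = v) := by
    intro p q hpq
    rw [hUT] at hpq
    rcases infix_two hpq with h1 | h2 | ⟨h3, h4⟩
    · obtain ⟨s, t, hst⟩ := h1
      exact Or.inl ⟨s, t ++ B, by rw [← hst]; simp⟩
    · obtain ⟨s, t, hst⟩ := h2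
      refine Or.inl ⟨A ++ s, t, ?_⟩
      conv_rhs => rw [List.append_assoc, ← hst]
      simp
    · rw [List.getLast?_append, hu, Option.some_or] at h3
      rw [List.head?_append, hv, Option.some_or] at h4
      exact Or.inr ⟨(Option.some.inj h3).symm, (Option.some.inj h4).symm⟩
  have hlast : (A ++ X ++ X ++ B).getLast? = (A ++ X ++ B).getLast? := by
    simp only [List.getLast?_append, hu, Option.some_or]
  have hhead : (A ++ X ++ X ++ B).head? = (A ++ X ++ B).head? := by
    simp only [List.head?_append, hv, Option.some_or, Option.or_assoc]
  constructor
  · intro P Q hPQ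
    cases Q with
    | nil =>
      exfalso
      have hl : (A ++ X ++ X ++ B).getLast? = some x := by
        rw [hPQ]; exact List.getLast?_concat
      rw [hlast] at hl
      obtain ⟨ys, hys⟩ := List.getLast?_eq_some_iff.mp hl
      obtain ⟨B', hB'⟩ := h.1 ys [] (by simpa using hys)
      simp at hB'
    | cons q Q' =>
      have hinf : [x, q] <:+: A ++ X ++ X ++ B := ⟨P, Q', by rw [hPQ]; simp⟩
      rcases key x q hinf with h1 | ⟨rfl, rfl⟩
      · obtain ⟨s, t, hst⟩ := h1
        obtain ⟨B', hB'⟩ := h.1 s (q :: t) (by rw [← hst]; simp)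
        injection hB' with hqy _
        exact ⟨Q', by rw [hqy]⟩
      · exact absurd hu hx
  · intro P Q hPQ
    rcases List.eq_nil_or_concat P with rfl | ⟨P'', p, rfl⟩
    · exfalso
      have hh : (A ++ X ++ X ++ B).head? = some y := by rw [hPQ]; simp
      rw [hhead] at hh
      obtain ⟨ys, hys⟩ := List.head?_eq_some_iff.mp hh
      obtain ⟨P', hP'⟩ := h.2 [] ys (by simpa using hys)
      exact List.append_ne_nil_of_right_ne_nil P' (by simp) hP'.symm
    · have hinf : [p, y] <:+: A ++ X ++ X ++ B := ⟨P'', Q, by rw [hPQ]; simp⟩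
      rcases key p y hinf with h1 | ⟨rfl, rfl⟩
      · obtain ⟨s, t, hst⟩ := h1
        obtain ⟨P', hP'⟩ := h.2 (s ++ [p]) t (by rw [← hst]; simp)
        have hpx : p = x := by
          have h5 := congrArg List.getLast? hP'
          rw [List.getLast?_concat, List.getLast?_concat] at h5
          exact Option.some.inj h5
        exact ⟨P'', by rw [hpx]; simp⟩
      · exact absurd hv hy

/-- uniqueness of decompositions at an element not occurring elsewhere -/
theorem decomp_unique {c : α} :
    ∀ (A C B D : List α), A ++ c :: B = C ++ c :: D → c ∉ A → c ∉ C → A = C ∧ B = D := by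
  intro A
  induction A with
  | nil =>
    intro C B D heq _ hC
    cases C with
    | nil => simpa using heq
    | cons c' C' =>
      have h1 : c :: B = c' :: (C' ++ c :: D) := by simpa using heq
      injection h1 with h2 _
      exact absurd (h2 ▸ List.mem_cons_self (a := c') (l := C')) (h2 ▸ hC)
  | cons a A' ih =>
    intro C B D heq hA hC
    cases C with
    | nil =>
      have h1 : a :: (A' ++ c :: B) = c :: D := by simpa using heq
      injection h1 with h2 _
      exact absurd (h2 ▸ List.mem_cons_self (a := a) (l := A')) hA
    | cons c' C' =>
      have h1 : a :: (A' ++ c :: B) = c' :: (C' ++ c :: D) := by simpa using heq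
      injection h1 with h2 h3
      subst h2
      have h4 := ih C' B D h3 (fun hm => hA (List.mem_cons_of_mem _ hm))
        (fun hm => hC (List.mem_cons_of_mem _ hm))
      exact ⟨by rw [h4.1], h4.2⟩

theorem stable_self {S : List α} (hS : S.Nodup) {P Q : List α} {a b : α}
    (h : S = P ++ a :: b :: Q) : StablePair a b S := by
  constructor
  · intro A B hAB
    have ha : a ∉ P := by
      have h1 := h ▸ hS
      rw [List.nodup_middle, List.nodup_cons, List.mem_append] at h1
      exact fun hm => h1.1 (Or.inl hm)
    have ha2 : a ∉ A := by
      have h1 := hAB ▸ hS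
      rw [List.nodup_middle, List.nodup_cons, List.mem_append] at h1
      exact fun hm => h1.1 (Or.inl hm)
    have h2 := decomp_unique P A (b :: Q) B (by rw [← h, ← hAB]) ha ha2
    exact ⟨Q, h2.2.symm⟩
  · intro A B hAB
    have h' : S = (P ++ [a]) ++ b :: Q := by simpa using h
    have hb : b ∉ P ++ [a] := by
      have h1 := h' ▸ hS
      rw [List.nodup_middle, List.nodup_cons, List.mem_append] at h1
      exact fun hm => h1.1 (Or.inl hm)
    have hb2 : b ∉ A := by
      have h1 := hAB ▸ hS
      rw [List.nodup_middle, List.nodup_cons, List.mem_append] at h1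
      exact fun hm => h1.1 (Or.inl hm)
    have h2 := decomp_unique (P ++ [a]) A Q B (by rw [← h', ← hAB]) hb hb2
    exact ⟨P, h2.1.symm⟩

theorem numStable_base {S : List α} (hS : S.Nodup) : numStable S S ≤ 1 := by
  cases S with
  | nil => simp [numStable, blocks, List.splitBy]
  | cons a l =>
    have hb : bad (fun p q => decide (StablePair p q (a :: l))) a l = 0 :=
      bad_eq_zero _ _ (fun P Q p q hPQ => decide_eq_true (stable_self hS hPQ)) l [] a rfl
    unfold numStable blocks
    rw [splitBy_length, hb]

theorem numStable_step {S T U : List α} (hS : S.Nodup) (h : TDStep T U) :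
    numStable S U ≤ numStable S T + 2 := by
  obtain ⟨A, X, B, hX, rfl, rfl⟩ := h
  cases S with
  | nil => simp [numStable, blocks, List.splitBy]
  | cons a l =>
    obtain ⟨u, hu⟩ := Option.isSome_iff_exists.mp (List.getLast?_isSome.mpr hX)
    obtain ⟨v, hv⟩ := Option.isSome_iff_exists.mp (List.isSome_head?.mpr hX)
    unfold numStable blocks
    rw [splitBy_length, splitBy_length]
    have key : ∀ p q : α, decide (StablePair p q (A ++ X ++ B)) = true → p ≠ u → q ≠ v →
        decide (StablePair p q (A ++ X ++ X ++ B)) = true := by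
      intro p q h1 h2 h3
      rw [decide_eq_true_iff] at h1 ⊢
      exact stable_transfer hX
        (by rw [hu]; exact fun hc => h2 (Option.some.inj hc).symm)
        (by rw [hv]; exact fun hc => h3 (Option.some.inj hc).symm) h1
    have h1 := bad_le_aux _ _ u v key l a
    have h2 := cf_le u l a hS
    have h3 := cs_le v l a (List.nodup_cons.mp hS).2
    omega

end Stmt13Aux

/-- Along a tandem duplication sequence `S = Seq 0 ⇒ ⋯ ⇒ Seq k = T` starting
from an exemplar string, the number of maximal `(S, Seq i)`-stable substrings
is at most `2i + 1`; one duplication increases this number by at most `2`. -/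
theorem stmt13 (S : List α) (hS : S.Nodup) (k : ℕ) (Seq : ℕ → List α)
    (h0 : Seq 0 = S) (hstep : ∀ i < k, TDStep (Seq i) (Seq (i + 1))) :
    (∀ i ≤ k, numStable S (Seq i) ≤ 2 * i + 1) ∧
    (∀ i < k, numStable S (Seq (i + 1)) ≤ numStable S (Seq i) + 2) := by
  have part2 : ∀ i < k, numStable S (Seq (i + 1)) ≤ numStable S (Seq i) + 2 :=
    fun i hi => Stmt13Aux.numStable_step hS (hstep i hi)
  refine ⟨?_, part2⟩
  intro i
  induction i with
  | zero => intro _; simpa [h0] using Stmt13Aux.numStable_base hS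
  | succ i ih =>
    intro hik
    have h1 := part2 i (by omega)
    have h2 := ih (by omega)
    omega
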